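/- π³ = (125/4)·((3-φ)^{3/2}/φ)·Σ_{n=-∞}^{∞} 1/(1-5n)³, where φ = (1+√5)/2 and the sum is over all integers n, interpreted as the limit of symmetric partial sums. -/

import Mathlib

open Real Filter

lemma bern3_eval (x : ℚ) : (Polynomial.bernoulli 3).eval x = x^3 - 3/2*x^2 + 1/2*x := by
  simp_rw [Polynomial.bernoulli, Finset.sum_range_succ, Polynomial.eval_add,
    Polynomial.eval_monomial]
  rw [Finset.sum_range_zero, Polynomial.eval_zero, zero_add, bernoulli_one]
  rw [bernoulli_eq_bernoulli'_of_ne_one zero_ne_one, bernoulli'_zero,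
    bernoulli_eq_bernoulli'_of_ne_one (by decide : 2 ≠ 1), bernoulli'_two,
    bernoulli_eq_bernoulli'_of_ne_one (by decide : 3 ≠ 1), bernoulli'_three]
  norm_num; ring

lemma hs_fifth (x : ℚ) (hx : (x:ℝ) ∈ Set.Icc (0:ℝ) 1) :
    HasSum (fun n : ℕ => 1 / (n : ℝ) ^ 3 * Real.sin (2 * π * n * x))
      ((2*π)^3/12 * ((x:ℝ)^3 - 3/2*(x:ℝ)^2 + 1/2*(x:ℝ))) := by
  have h := hasSum_one_div_nat_pow_mul_sin (k := 1) one_ne_zero hx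
  have e1 : (2*1+1 : ℕ) = 3 := by norm_num
  rw [e1] at h
  convert h using 1
  rw [show ((x:ℝ)) = algebraMap ℚ ℝ x from rfl, Polynomial.eval_map,
    Polynomial.eval₂_at_apply, bern3_eval]
  push_cast
  norm_num [Nat.factorial]
  left; ring

noncomputable def gg : ℕ → ℝ := fun n =>
  if n % 5 = 1 then 1/(n:ℝ)^3 else if n % 5 = 4 then -(1/(n:ℝ)^3) else 0

lemma key_trig : Real.sin (2*π/5)^2 + Real.sin (4*π/5)^2 = 5/4 := by
  have hc := Real.cos_pi_div_five
  have h5 : Real.sqrt 5 ^ 2 = 5 := Real.sq_sqrt (by norm_num)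
  have h2 : Real.cos (2*π/5) = 2 * Real.cos (π/5)^2 - 1 := by
    rw [show (2*π/5) = 2*(π/5) by ring, Real.cos_two_mul]
  have h4 : Real.cos (4*π/5) = 2 * Real.cos (2*π/5)^2 - 1 := by
    rw [show (4*π/5) = 2*(2*π/5) by ring, Real.cos_two_mul]
  have s1 : Real.sin (2*π/5)^2 = 1 - Real.cos (2*π/5)^2 := by
    rw [Real.sin_sq]
  have s2 : Real.sin (4*π/5)^2 = 1 - Real.cos (4*π/5)^2 := by
    rw [Real.sin_sq]
  rw [s1, s2, h4, h2, hc]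
  linear_combination (-(Real.sqrt 5)^6/1024 - (Real.sqrt 5)^5/128 - (Real.sqrt 5)^4/1024
    + 3*(Real.sqrt 5)^3/32 + 69*(Real.sqrt 5)^2/1024 - 35*(Real.sqrt 5)/128 + 61/1024) * h5

lemma pointwise (n : ℕ) :
    (4/5*Real.sin (2*π/5)) * (1/(n:ℝ)^3 * Real.sin (2*π*n*(1/5))) +
    (4/5*Real.sin (4*π/5)) * (1/(n:ℝ)^3 * Real.sin (2*π*n*(2/5))) = gg n := by
  obtain ⟨q, r, hr, rfl⟩ : ∃ q r, r < 5 ∧ n = 5*q + r :=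
    ⟨n/5, n%5, Nat.mod_lt _ (by norm_num), by omega⟩
  have e1 : Real.sin (2*π*((5*q+r : ℕ):ℝ)*(1/5)) = Real.sin (2*π*r/5) := by
    rw [show 2*π*((5*q+r : ℕ):ℝ)*(1/5) = 2*π*r/5 + ((q:ℤ):ℝ)*(2*π) by push_cast; ring,
      Real.sin_add_int_mul_two_pi]
  have e2 : Real.sin (2*π*((5*q+r : ℕ):ℝ)*(2/5)) = Real.sin (4*π*r/5) := by
    rw [show 2*π*((5*q+r : ℕ):ℝ)*(2/5) = 4*π*r/5 + (((2*q:ℤ)):ℝ)*(2*π) by push_cast; ring,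
      Real.sin_add_int_mul_two_pi]
  rw [e1, e2]
  have hmod : (5*q+r) % 5 = r := by omega
  rw [gg, hmod]
  have k := key_trig
  interval_cases r
  · norm_num
  · norm_num
    linear_combination (4/5) * (1/(5*(q:ℝ)+1)^3) * k
  · have a1 : Real.sin (2*π*2/5) = Real.sin (4*π/5) := by ring_nf
    have a2 : Real.sin (4*π*2/5) = -Real.sin (2*π/5) := by
      rw [show (4*π*2/5) = 2*π - 2*π/5 by ring, Real.sin_two_pi_sub]
    norm_num [a1, a2]; ring
  · have a1 : Real.sin (2*π*3/5) = -Real.sin (4*π/5) := by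
      rw [show (2*π*3/5) = 2*π - 4*π/5 by ring, Real.sin_two_pi_sub]
    have a2 : Real.sin (4*π*3/5) = Real.sin (2*π/5) := by
      rw [show (4*π*3/5) = 2*π/5 + ((1:ℤ):ℝ)*(2*π) by push_cast; ring, Real.sin_add_int_mul_two_pi]
    norm_num [a1, a2]; ring
  · have a1 : Real.sin (2*π*4/5) = -Real.sin (2*π/5) := by
      rw [show (2*π*4/5) = 2*π - 2*π/5 by ring, Real.sin_two_pi_sub]
    have a2 : Real.sin (4*π*4/5) = -Real.sin (4*π/5) := by
      rw [show (4*π*4/5) = (2*π - 4*π/5) + ((1:ℤ):ℝ)*(2*π) by push_cast; ring,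
        Real.sin_add_int_mul_two_pi, Real.sin_two_pi_sub]
    norm_num [a1, a2]
    linear_combination (-(4:ℝ)/5) * (1/(5*(q:ℝ)+4)^3) * k

lemma hasSum_gg : HasSum gg ((8*π^3/625) * (2*Real.sin (2*π/5) + Real.sin (4*π/5))) := by
  have hA := hs_fifth (1/5) (by constructor <;> norm_num)
  have hB := hs_fifth (2/5) (by constructor <;> norm_num)
  rw [show (((1/5:ℚ)):ℝ) = 1/5 by norm_num] at hA
  rw [show (((2/5:ℚ)):ℝ) = 2/5 by norm_num] at hB
  have h := (hA.mul_left (4/5*Real.sin (2*π/5))).add (hB.mul_left (4/5*Real.sin (4*π/5)))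
  rw [funext pointwise] at h
  convert h using 1
  · rfl
  ring

lemma hasSum_f : HasSum (fun n : ℤ => 1 / ((1:ℝ) - 5*n)^3)
    ((8*π^3/625) * (2*Real.sin (2*π/5) + Real.sin (4*π/5))) := by
  have hinj : Function.Injective (fun n : ℤ => (1 - 5*n).natAbs) := by
    intro a b h; simp only at h; omega
  have hzero : ∀ m, m ∉ Set.range (fun n : ℤ => (1 - 5*n).natAbs) → gg m = 0 := by
    intro m hm
    rw [gg]
    split_ifs with h1 h2
    · exfalso; exact hm ⟨-((m/5 : ℕ) : ℤ), by simp only; omega⟩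
    · exfalso; exact hm ⟨((m/5 : ℕ) : ℤ) + 1, by simp only; omega⟩
    · rfl
  have := (hinj.hasSum_iff hzero).2 hasSum_gg
  convert this using 1
  funext n
  simp only [Function.comp]
  rcases le_or_gt n 0 with h | h
  · have hm : (((1 - 5*n).natAbs : ℤ)) = 1 - 5*n := by omega
    have hmod : (1 - 5*n).natAbs % 5 = 1 := by omega
    rw [gg, if_pos hmod]
    have : (((1 - 5*n).natAbs : ℝ)) = 1 - 5*(n:ℝ) := by
      rw [← Int.cast_natCast (R := ℝ), hm]; push_cast; ring
    rw [this]
  · have hm : (((1 - 5*n).natAbs : ℤ)) = 5*n - 1 := by omega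
    have hmod : (1 - 5*n).natAbs % 5 = 4 := by omega
    have hne : (1 - 5*n).natAbs ≠ 1 % 5 := by omega
    rw [gg]
    rw [if_neg (by omega), if_pos hmod]
    have hcast : (((1 - 5*n).natAbs : ℝ)) = 5*(n:ℝ) - 1 := by
      rw [← Int.cast_natCast (R := ℝ), hm]; push_cast; ring
    rw [hcast, show (1:ℝ) - 5*(n:ℝ) = -(5*(n:ℝ) - 1) by ring, Odd.neg_pow (⟨1, by norm_num⟩),
      div_neg]

theorem pi_cubed_golden_five :
    ∃ S : ℝ,
      Tendsto (fun N : ℕ => ∑ n ∈ Finset.Icc (-(N : ℤ)) (N : ℤ), 1 / ((1 : ℝ) - 5 * n) ^ 3)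
        atTop (nhds S) ∧
      π ^ 3 = (125 / 4) *
        ((3 - (1 + Real.sqrt 5) / 2) ^ ((3 : ℝ) / 2) / ((1 + Real.sqrt 5) / 2)) * S := by
  refine ⟨(8*π^3/625) * (2*Real.sin (2*π/5) + Real.sin (4*π/5)), ?_, ?_⟩
  · have hN : Tendsto (fun N : ℕ => Finset.Icc (-(N:ℤ)) (N:ℤ)) atTop atTop := by
      apply tendsto_atTop_finset_of_monotone
      · intro a b hab
        apply Finset.Icc_subset_Icc
        · simp only [neg_le_neg_iff]; exact_mod_cast hab
        · exact_mod_cast hab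
      · intro x
        exact ⟨x.natAbs, Finset.mem_Icc.2 (by constructor <;> omega)⟩
    exact hasSum_f.comp hN
  · have h5 : Real.sqrt 5 ^ 2 = 5 := Real.sq_sqrt (by norm_num)
    have hs2 : Real.sin (π/5)^2 = (5 - Real.sqrt 5)/8 := by
      rw [Real.sin_sq, Real.cos_pi_div_five]
      linear_combination (-1/16) * h5
    have hs4 : Real.sin (π/5)^4 = (15 - 5*Real.sqrt 5)/32 := by
      linear_combination (Real.sin (π/5)^2 + (5 - Real.sqrt 5)/8) * hs2 + (1/64) * h5
    have hspos : 0 < Real.sin (π/5) :=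
      Real.sin_pos_of_pos_of_lt_pi (by positivity) (by linarith [pi_pos])
    have hrw : (3 - (1 + Real.sqrt 5)/2) = (2*Real.sin (π/5))^2 := by
      linear_combination (-4) * hs2
    have hpow : (3 - (1 + Real.sqrt 5)/2) ^ ((3:ℝ)/2) = (2*Real.sin (π/5))^3 := by
      rw [hrw, ← Real.rpow_natCast (2*Real.sin (π/5)) 2, ← Real.rpow_mul (by positivity)]
      rw [show ((2:ℕ):ℝ) * ((3:ℝ)/2) = ((3:ℕ):ℝ) by norm_num, Real.rpow_natCast]
    have e1 : Real.sin (2*π/5) = 2*Real.sin (π/5)*Real.cos (π/5) := by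
      rw [show (2*π/5) = 2*(π/5) by ring, Real.sin_two_mul]
    have e2 : Real.sin (4*π/5) = Real.sin (π/5) := by
      rw [show (4*π/5) = π - π/5 by ring, Real.sin_pi_sub]
    rw [hpow, e1, e2, Real.cos_pi_div_five]
    have hφ : ((1:ℝ) + Real.sqrt 5)/2 ≠ 0 := by positivity
    field_simp
    linear_combination (-(64000*Real.sqrt 5 + 128000)) * hs4 + 10000 * h5
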